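/- Let (X, Σ, μ) be a σ-finite measure space and let u : X → ℂ be Σ-measurable (so that the multiplication operator M_u with domain D(M_u) = {f ∈ L²(μ) : u·f ∈ L²(μ)}, M_u f = u·f, is densely defined). Then the following are equivalent: (i) u·f ∈ D(M_u) for every f ∈ D(M_u) (i.e., M_u(D(M_u)) ⊆ D(M_u)); (ii) there exists a constant c > 0 such that |u|⁴ ≤ c·(1 + |u|²) μ-a.e. on X. -/

import Mathlib

open MeasureTheory Filter ENNReal NNReal

noncomputable section

variable {X : Type*}

/-- A set `A` in the sub-σ-algebra `m` is *admissible* for the weight `u` if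
`μ A + ∫_A |u|² dμ < ∞`. -/
def Admissible (m : MeasurableSpace X) [m0 : MeasurableSpace X] (μ : Measure X)
    (u : X → ℂ) (A : Set X) : Prop :=
  MeasurableSet[m] A ∧ μ A + ∫⁻ x in A, (‖u x‖₊ : ℝ≥0∞) ^ 2 ∂μ < ⊤

/-- `gf` is a version of `E(u·f)`, i.e. `gf` is an `m`-measurable function in `L²(μ)` with
`∫_A u·f dμ = ∫_A gf dμ` for every admissible `A`.  `f ∈ D(EM_u)` iff `f ∈ L²(μ)` and such a
`gf` exists. -/
def IsWCE (m : MeasurableSpace X) [m0 : MeasurableSpace X] (μ : Measure X)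
    (u f gf : X → ℂ) : Prop :=
  StronglyMeasurable[m] gf ∧ MemLp gf 2 μ ∧
    ∀ A : Set X, Admissible m μ u A → ∫ x in A, u x * f x ∂μ = ∫ x in A, gf x ∂μ

section Stmt19Aux

variable [m0 : MeasurableSpace X] {μ : Measure X}


private lemma stmt19_mem2_iff {f : X → ℂ} (hf : AEStronglyMeasurable f μ) :
    MemLp f 2 μ ↔ ∫⁻ x, (‖f x‖₊ : ℝ≥0∞) ^ 2 ∂μ < ⊤ := by
  rw [MemLp, eLpNorm_lt_top_iff_lintegral_rpow_enorm_lt_top (by norm_num) (by norm_num)]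
  have : ∀ x, ‖f x‖ₑ ^ ((2:ℝ≥0∞).toReal) = (‖f x‖₊ : ℝ≥0∞) ^ 2 := by
    intro x
    rw [ENNReal.toReal_ofNat, show ((2:ℝ) = ((2:ℕ):ℝ)) by norm_num, ENNReal.rpow_natCast]; rfl
  simp only [this, hf, true_and]

private lemma stmt19_hard (μ : Measure X) [SigmaFinite μ] (u : X → ℂ) (hu : Measurable u)
    (hb : ∀ n : ℕ, μ {x | (n:ℝ) < ‖u x‖} ≠ 0) :
    ∃ f : X → ℂ, MemLp f 2 μ ∧ MemLp (fun x => u x * f x) 2 μ ∧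
      ¬ MemLp (fun x => u x * (u x * f x)) 2 μ := by
  set E : ℕ → Set X := fun n => (fun x => ⌊‖u x‖⌋₊) ⁻¹' {n} with hEdef
  have hfloor : Measurable fun x => ⌊‖u x‖⌋₊ := hu.norm.nat_floor
  have hE : ∀ n, MeasurableSet (E n) := fun n => hfloor (measurableSet_singleton n)
  have hmemE : ∀ {x n}, x ∈ E n → ⌊‖u x‖⌋₊ = n := fun hx => hx
  have hdisj : Pairwise (Function.onFun Disjoint E) := by
    intro m n hmn
    simp only [Function.onFun, Set.disjoint_left]
    intro x hxm hxn
    exact hmn ((hmemE hxm).symm.trans (hmemE hxn))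
  -- infinitely many E n have positive measure
  have hS : ∀ n : ℕ, ∃ m, n ≤ m ∧ μ (E m) ≠ 0 := by
    intro n
    by_contra h
    push_neg at h
    apply hb n
    refine measure_mono_null (fun x hx => ?_) ((measure_iUnion_null_iff).2
      (fun m : ℕ => h (n + m) (Nat.le_add_right _ _)))
    have hle : n ≤ ⌊‖u x‖⌋₊ := Nat.le_floor (le_of_lt hx)
    exact Set.mem_iUnion.2 ⟨⌊‖u x‖⌋₊ - n, by
      simp only [hEdef, Set.mem_preimage, Set.mem_singleton_iff]; omega⟩
  -- choose finite positive measure subsets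
  have hFex : ∀ n, ∃ F : Set X, MeasurableSet F ∧ F ⊆ E n ∧ μ F < ⊤ ∧
      (μ (E n) ≠ 0 → 0 < μ F) := by
    intro n
    by_cases h : μ (E n) = 0
    · exact ⟨∅, MeasurableSet.empty, Set.empty_subset _, by simp, fun h' => absurd h h'⟩
    · obtain ⟨t, htm, hts, htpos, htfin⟩ :=
        Measure.exists_subset_measure_lt_top (hE n) (pos_iff_ne_zero.2 h)
      exact ⟨t, htm, hts, htfin, fun _ => htpos⟩
  choose F hFm hFE hFfin hFpos using hFex
  have hdisjF : Pairwise (Function.onFun Disjoint F) :=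
    fun m n h => (hdisj h).mono (hFE m) (hFE n)
  set a : ℕ → ℝ := fun n =>
    if μ (E n) = 0 then 0 else (((n:ℝ)+1)^2 * Real.sqrt (μ (F n)).toReal)⁻¹ with hadef
  have ha_nonneg : ∀ n, 0 ≤ a n := by
    intro n; rw [hadef]; dsimp only; split
    · exact le_refl 0
    · positivity
  -- key computation
  have keyeq : ∀ n, μ (E n) ≠ 0 →
      (‖a n‖₊ : ℝ≥0∞) ^ 2 * μ (F n) = ENNReal.ofReal (1/((n:ℝ)+1)^4) := by
    intro n hn
    have hbpos : 0 < (μ (F n)).toReal := ENNReal.toReal_pos (hFpos n hn).ne' (hFfin n).ne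
    have h1 : (‖a n‖₊ : ℝ≥0∞) = ENNReal.ofReal (a n) :=
      Real.enorm_eq_ofReal (ha_nonneg n)
    rw [h1, ← ENNReal.ofReal_pow (ha_nonneg n),
      ← ENNReal.ofReal_toReal (hFfin n).ne, ← ENNReal.ofReal_mul (by positivity)]
    congr 1
    rw [hadef]; dsimp only
    rw [if_neg hn, inv_pow, mul_pow, Real.sq_sqrt hbpos.le]
    rw [← pow_mul]
    field_simp
  have keyle : ∀ n, (‖a n‖₊ : ℝ≥0∞) ^ 2 * μ (F n) ≤ ENNReal.ofReal (1/((n:ℝ)+1)^4) := by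
    intro n
    by_cases hn : μ (E n) = 0
    · have : a n = 0 := by rw [hadef]; dsimp only; rw [if_pos hn]
      simp [this]
    · exact (keyeq n hn).le
  -- the function f
  set U : Set X := ⋃ n, F n with hUdef
  have hUm : MeasurableSet U := MeasurableSet.iUnion hFm
  set f : X → ℂ := Set.indicator U (fun x => ((a ⌊‖u x‖⌋₊ : ℝ) : ℂ)) with hfdef
  have hfm : Measurable f :=
    (Complex.measurable_ofReal.comp ((measurable_from_top (f := a)).comp hfloor)).indicator hUm
  -- master computation
  have hmain : ∀ w : X → ℝ≥0∞,
      ∫⁻ x, w x * (‖f x‖₊ : ℝ≥0∞) ^ 2 ∂μ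
        = ∑' n, ∫⁻ x in F n, w x * (‖a n‖₊ : ℝ≥0∞) ^ 2 ∂μ := by
    intro w
    have hpt : ∀ x, w x * (‖f x‖₊ : ℝ≥0∞) ^ 2
        = Set.indicator U (fun x => w x * (‖a ⌊‖u x‖⌋₊‖₊ : ℝ≥0∞) ^ 2) x := by
      intro x
      by_cases hx : x ∈ U
      · simp [hfdef, Set.indicator_of_mem hx]
      · simp [hfdef, Set.indicator_of_notMem hx]
    simp_rw [hpt]
    rw [lintegral_indicator hUm, hUdef, lintegral_iUnion hFm hdisjF]
    refine tsum_congr fun n => ?_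
    refine lintegral_congr_ae ((ae_restrict_iff' (hFm n)).2 (ae_of_all _ fun x hx => ?_))
    have : ⌊‖u x‖⌋₊ = n := hmemE (hFE n hx)
    simp only [this]
  -- summability
  have hsum2 : ∑' n : ℕ, ENNReal.ofReal (1/((n:ℝ)+1)^2) ≠ ⊤ := by
    have hsummable : Summable (fun n : ℕ => 1/((n:ℝ)+1)^2) := by
      have h0 : Summable (fun n : ℕ => 1/((n:ℝ))^2) :=
        Real.summable_one_div_nat_pow.2 one_lt_two
      have := (_root_.summable_nat_add_iff 1).2 h0
      simpa using this
    rw [← ENNReal.ofReal_tsum_of_nonneg (fun n => by positivity) hsummable]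
    exact ENNReal.ofReal_ne_top
  have hle24 : ∀ n : ℕ, ENNReal.ofReal (1/((n:ℝ)+1)^4) ≤ ENNReal.ofReal (1/((n:ℝ)+1)^2) := by
    intro n
    apply ENNReal.ofReal_le_ofReal
    have h1 : (1:ℝ) ≤ (n:ℝ)+1 := le_add_of_nonneg_left (Nat.cast_nonneg n)
    apply one_div_le_one_div_of_le (by positivity)
    calc ((n:ℝ)+1)^2 ≤ ((n:ℝ)+1)^4 := pow_le_pow_right₀ h1 (by norm_num)
      _ = ((n:ℝ)+1)^4 := rfl
  -- f ∈ L²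
  have memf : MemLp f 2 μ := by
    rw [stmt19_mem2_iff hfm.aestronglyMeasurable]
    have h1 : ∫⁻ x, (‖f x‖₊ : ℝ≥0∞) ^ 2 ∂μ = ∑' n, (‖a n‖₊ : ℝ≥0∞) ^ 2 * μ (F n) := by
      have := hmain (fun _ => 1)
      simpa [one_mul, setLIntegral_const] using this
    rw [h1]
    exact lt_of_le_of_lt (ENNReal.tsum_le_tsum fun n => (keyle n).trans (hle24 n))
      (lt_top_iff_ne_top.2 hsum2)
  -- u·f ∈ L²
  have memuf : MemLp (fun x => u x * f x) 2 μ := by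
    rw [stmt19_mem2_iff (f := fun x => u x * f x) (hu.mul hfm).aestronglyMeasurable]
    have hpt : ∀ x, (‖u x * f x‖₊ : ℝ≥0∞) ^ 2 = (‖u x‖₊ : ℝ≥0∞) ^ 2 * (‖f x‖₊ : ℝ≥0∞) ^ 2 := by
      intro x; rw [nnnorm_mul]; push_cast; ring
    simp_rw [hpt]
    rw [hmain (fun x => (‖u x‖₊ : ℝ≥0∞) ^ 2)]
    have hterm : ∀ n, ∫⁻ x in F n, (‖u x‖₊ : ℝ≥0∞) ^ 2 * (‖a n‖₊ : ℝ≥0∞) ^ 2 ∂μ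
        ≤ ENNReal.ofReal (1/((n:ℝ)+1)^2) := by
      intro n
      have hbd : ∀ x ∈ F n, (‖u x‖₊ : ℝ≥0∞) ^ 2 * (‖a n‖₊ : ℝ≥0∞) ^ 2
          ≤ ENNReal.ofReal (((n:ℝ)+1)^2) * (‖a n‖₊ : ℝ≥0∞) ^ 2 := by
        intro x hx
        have hfl : ⌊‖u x‖⌋₊ = n := hmemE (hFE n hx)
        have hlt : ‖u x‖ ≤ (n:ℝ)+1 := by
          have h2 := Nat.lt_floor_add_one ‖u x‖
          rw [hfl] at h2
          exact_mod_cast h2.le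
        gcongr
        rw [show (‖u x‖₊ : ℝ≥0∞) = ENNReal.ofReal ‖u x‖ from (ofReal_norm _).symm, ← ENNReal.ofReal_pow (norm_nonneg _)]
        exact ENNReal.ofReal_le_ofReal (by nlinarith [norm_nonneg (u x)])
      calc ∫⁻ x in F n, (‖u x‖₊ : ℝ≥0∞) ^ 2 * (‖a n‖₊ : ℝ≥0∞) ^ 2 ∂μ
          ≤ ∫⁻ _x in F n, ENNReal.ofReal (((n:ℝ)+1)^2) * (‖a n‖₊ : ℝ≥0∞) ^ 2 ∂μ :=
            setLIntegral_mono' (hFm n) hbd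
        _ = ENNReal.ofReal (((n:ℝ)+1)^2) * ((‖a n‖₊ : ℝ≥0∞) ^ 2 * μ (F n)) := by
            rw [setLIntegral_const]; ring
        _ ≤ ENNReal.ofReal (((n:ℝ)+1)^2) * ENNReal.ofReal (1/((n:ℝ)+1)^4) := by
            gcongr; exact keyle n
        _ = ENNReal.ofReal (1/((n:ℝ)+1)^2) := by
            rw [← ENNReal.ofReal_mul (by positivity)]
            congr 1
            field_simp
    exact lt_of_le_of_lt (ENNReal.tsum_le_tsum hterm) (lt_top_iff_ne_top.2 hsum2)
  -- u·(u·f) ∉ L²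
  refine ⟨f, memf, memuf, fun hmem => ?_⟩
  have hlt := (stmt19_mem2_iff hmem.1).1 hmem
  have hpt : ∀ x, (‖u x * (u x * f x)‖₊ : ℝ≥0∞) ^ 2
      = (‖u x‖₊ : ℝ≥0∞) ^ 4 * (‖f x‖₊ : ℝ≥0∞) ^ 2 := by
    intro x; rw [nnnorm_mul, nnnorm_mul]; push_cast; ring
  simp_rw [hpt] at hlt
  rw [hmain (fun x => (‖u x‖₊ : ℝ≥0∞) ^ 4)] at hlt
  set t : ℕ → ℝ≥0∞ := fun n => ∫⁻ x in F n, (‖u x‖₊ : ℝ≥0∞) ^ 4 * (‖a n‖₊ : ℝ≥0∞) ^ 2 ∂μ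
    with htdef
  have hlow : ∀ n, 1 ≤ n → μ (E n) ≠ 0 → ENNReal.ofReal (1/16 : ℝ) ≤ t n := by
    intro n h1 hn
    have hbd : ∀ x ∈ F n, (ENNReal.ofReal ((n:ℝ)^4)) * (‖a n‖₊ : ℝ≥0∞) ^ 2
        ≤ (‖u x‖₊ : ℝ≥0∞) ^ 4 * (‖a n‖₊ : ℝ≥0∞) ^ 2 := by
      intro x hx
      have hfl : ⌊‖u x‖⌋₊ = n := hmemE (hFE n hx)
      have hge : (n:ℝ) ≤ ‖u x‖ := by rw [← hfl]; exact Nat.floor_le (norm_nonneg _)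
      gcongr
      rw [show (‖u x‖₊ : ℝ≥0∞) = ENNReal.ofReal ‖u x‖ from (ofReal_norm _).symm, ← ENNReal.ofReal_pow (norm_nonneg _)]
      exact ENNReal.ofReal_le_ofReal (pow_le_pow_left₀ (Nat.cast_nonneg n) hge 4)
    calc ENNReal.ofReal (1/16 : ℝ)
        ≤ ENNReal.ofReal ((n:ℝ)^4 * (1/((n:ℝ)+1)^4)) := by
          apply ENNReal.ofReal_le_ofReal
          have h1' : (1:ℝ) ≤ (n:ℝ) := by exact_mod_cast h1
          rw [mul_one_div, div_le_div_iff₀ (by norm_num) (by positivity)]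
          have h2 : (n:ℝ)+1 ≤ 2*(n:ℝ) := by linarith
          calc (1:ℝ) * ((n:ℝ)+1)^4 = ((n:ℝ)+1)^4 := one_mul _
            _ ≤ (2*(n:ℝ))^4 := pow_le_pow_left₀ (by positivity) h2 4
            _ = (n:ℝ)^4 * 16 := by ring
      _ = ENNReal.ofReal ((n:ℝ)^4) * ENNReal.ofReal (1/((n:ℝ)+1)^4) := by
          rw [ENNReal.ofReal_mul (by positivity)]
      _ = ENNReal.ofReal ((n:ℝ)^4) * ((‖a n‖₊ : ℝ≥0∞) ^ 2 * μ (F n)) := by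
          rw [keyeq n hn]
      _ = ∫⁻ _x in F n, ENNReal.ofReal ((n:ℝ)^4) * (‖a n‖₊ : ℝ≥0∞) ^ 2 ∂μ := by
          rw [setLIntegral_const]; ring
      _ ≤ t n := setLIntegral_mono' (hFm n) hbd
  have hinf : {n : ℕ | ENNReal.ofReal (1/16 : ℝ) ≤ t n}.Infinite := by
    apply Set.infinite_of_forall_exists_gt
    intro k
    obtain ⟨m, hm1, hm2⟩ := hS (k+1)
    exact ⟨m, hlow m (by omega) hm2, by omega⟩
  exact hinf (ENNReal.finite_const_le_of_tsum_ne_top hlt.ne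
    (ENNReal.ofReal_pos.2 (by norm_num)).ne')


end Stmt19Aux

/-- For the multiplication operator `M_u` on `L²(μ)` with domain
`{f ∈ L² : u·f ∈ L²}`, one has `M_u(D(M_u)) ⊆ D(M_u)` iff there is `c > 0` with
`|u|⁴ ≤ c·(1 + |u|²)` a.e. -/
theorem stmt19 [m0 : MeasurableSpace X] (μ : Measure X) [SigmaFinite μ]
    (u : X → ℂ) (hu : Measurable u) :
    (∀ f : X → ℂ, MemLp f 2 μ → MemLp (fun x => u x * f x) 2 μ →
      MemLp (fun x => u x * (u x * f x)) 2 μ) ↔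
    ∃ c : ℝ, 0 < c ∧ ∀ᵐ x ∂μ, ‖u x‖ ^ 4 ≤ c * (1 + ‖u x‖ ^ 2) := by
  constructor
  · intro H
    by_contra hc
    push_neg at hc
    have hb : ∀ n : ℕ, μ {x | (n:ℝ) < ‖u x‖} ≠ 0 := by
      intro n hn
      refine hc ((n:ℝ)^2+1) (by positivity) ?_
      rw [ae_iff]
      refine measure_mono_null (fun x hx => ?_) hn
      simp only [Set.mem_setOf_eq, not_le, not_not] at hx
      simp only [Set.mem_setOf_eq]
      by_contra hle
      push_neg at hle
      have h0 : (0:ℝ) ≤ ‖u x‖ := norm_nonneg _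
      have hsq : ‖u x‖^2 ≤ (n:ℝ)^2 := by nlinarith [Nat.cast_nonneg (α := ℝ) n]
      have h4 : ‖u x‖^2 * ‖u x‖^2 ≤ (n:ℝ)^2 * ‖u x‖^2 :=
        mul_le_mul_of_nonneg_right hsq (sq_nonneg _)
      nlinarith [h4, sq_nonneg (‖u x‖)]
    obtain ⟨f, hf1, hf2, hf3⟩ := stmt19_hard μ u hu hb
    exact hf3 (H f hf1 hf2)
  · rintro ⟨c, hc, hae⟩ f hf huf
    have hg : MemLp (fun x => Real.sqrt c * ‖f x‖ + Real.sqrt c * ‖u x * f x‖) 2 μ :=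
      (hf.norm.const_mul _).add (huf.norm.const_mul _)
    refine hg.of_le
      ((hu.aemeasurable.mul (hu.aemeasurable.mul hf.1.aemeasurable)).aestronglyMeasurable) ?_
    filter_upwards [hae] with x hx
    have h0 : (0:ℝ) ≤ Real.sqrt c * ‖f x‖ + Real.sqrt c * ‖u x * f x‖ := by positivity
    rw [Real.norm_of_nonneg h0]
    have h1 : ‖u x * (u x * f x)‖ = ‖u x‖^2 * ‖f x‖ := by
      simp [norm_mul]; ring
    rw [h1]
    have h2 : (‖u x‖^2 * ‖f x‖)^2 ≤ (Real.sqrt c * ‖f x‖ + Real.sqrt c * ‖u x * f x‖)^2 := by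
      have hsq : Real.sqrt c ^ 2 = c := Real.sq_sqrt hc.le
      have hn : ‖u x * f x‖ = ‖u x‖ * ‖f x‖ := norm_mul _ _
      have key : ‖u x‖^4 * ‖f x‖^2 ≤ c*(1+‖u x‖^2)*‖f x‖^2 :=
        mul_le_mul_of_nonneg_right hx (sq_nonneg _)
      have hcross : 0 ≤ c * ‖u x‖ * ‖f x‖^2 := by positivity
      rw [hn]
      nlinarith [key, hcross]
    have h3 : (0:ℝ) ≤ ‖u x‖^2 * ‖f x‖ := by positivity
    nlinarith [h2]
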